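/- Let k be a field and A₁,ₖ the path algebra of the quiver with vertices 0,1,…,k, arrows ℓᵢ : (i−1) → i and rᵢ : i → (i−1) for 1 ≤ i ≤ k, and a loop x₁ at vertex k, modulo the relations ℓ_{i+1}ℓ_i = 0, r_i r_{i+1} = 0 (for 1 ≤ i ≤ k−1), x₁ℓ_k = 0, r_k x₁ = 0. Then the subalgebra eₖ A₁,ₖ eₖ of endomorphisms of vertex k is isomorphic to k[X₁,U_k]/(X₁U_k), where X₁ corresponds to x₁ and U_k to r_kℓ_k = ℓ_k r_k; and e₀ A₁,ₖ e₀ ≅ k[U₁] where U₁ = r₁ℓ₁. -/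

import Mathlib

/-!
The algebra `A₁,ₖ`: the path algebra of the quiver with vertices `0,1,…,k`, arrows
`ℓᵢ : (i−1) → i` and `rᵢ : i → (i−1)` for `1 ≤ i ≤ k`, and a loop `x₁` at vertex `k`,
modulo the relations `ℓ_{i+1}ℓ_i = 0`, `rᵢr_{i+1} = 0`, `x₁ℓ_k = 0`, `r_kx₁ = 0`.
(Products are composition: `fg = f ∘ g`.)

We present it as `RingQuot` of the free algebra on generators
`e i` (`0 ≤ i ≤ k`, the vertex idempotents), `l i` (= `ℓ_{i+1} : i → i+1`, `0 ≤ i < k`),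
`r i` (= `r_{i+1} : i+1 → i`, `0 ≤ i < k`) and `x` (= `x₁`), with the path-algebra
relations (idempotency, orthogonality, `∑ e i = 1`, source/target relations) together
with the relations above; out-of-range generators are set to `0`.
-/

/-- Generators of the path algebra `A₁,ₖ`. -/
inductive PGen : Type
  | e : ℕ → PGen
  | l : ℕ → PGen
  | r : ℕ → PGen
  | x : PGen

open FreeAlgebra

/-- The defining relations of `A₁,ₖ`. -/
inductive PRel (𝕜 : Type) [CommRing 𝕜] (k : ℕ) :
    FreeAlgebra 𝕜 PGen → FreeAlgebra 𝕜 PGen → Prop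
  | e_idem (i : ℕ) (h : i ≤ k) :
      PRel 𝕜 k (ι 𝕜 (PGen.e i) * ι 𝕜 (PGen.e i)) (ι 𝕜 (PGen.e i))
  | e_orth (i j : ℕ) (hi : i ≤ k) (hj : j ≤ k) (hij : i ≠ j) :
      PRel 𝕜 k (ι 𝕜 (PGen.e i) * ι 𝕜 (PGen.e j)) 0
  | e_sum : PRel 𝕜 k (∑ i ∈ Finset.range (k + 1), ι 𝕜 (PGen.e i)) 1
  | e_oob (i : ℕ) (h : k < i) : PRel 𝕜 k (ι 𝕜 (PGen.e i)) 0
  | l_src (i : ℕ) (h : i < k) :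
      PRel 𝕜 k (ι 𝕜 (PGen.l i) * ι 𝕜 (PGen.e i)) (ι 𝕜 (PGen.l i))
  | l_tgt (i : ℕ) (h : i < k) :
      PRel 𝕜 k (ι 𝕜 (PGen.e (i + 1)) * ι 𝕜 (PGen.l i)) (ι 𝕜 (PGen.l i))
  | l_oob (i : ℕ) (h : k ≤ i) : PRel 𝕜 k (ι 𝕜 (PGen.l i)) 0
  | r_src (i : ℕ) (h : i < k) :
      PRel 𝕜 k (ι 𝕜 (PGen.r i) * ι 𝕜 (PGen.e (i + 1))) (ι 𝕜 (PGen.r i))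
  | r_tgt (i : ℕ) (h : i < k) :
      PRel 𝕜 k (ι 𝕜 (PGen.e i) * ι 𝕜 (PGen.r i)) (ι 𝕜 (PGen.r i))
  | r_oob (i : ℕ) (h : k ≤ i) : PRel 𝕜 k (ι 𝕜 (PGen.r i)) 0
  | x_vertex : PRel 𝕜 k (ι 𝕜 (PGen.e k) * ι 𝕜 PGen.x * ι 𝕜 (PGen.e k)) (ι 𝕜 PGen.x)
  -- `ℓ_{i+2} ℓ_{i+1} = 0`
  | ll (i : ℕ) (h : i + 1 < k) : PRel 𝕜 k (ι 𝕜 (PGen.l (i + 1)) * ι 𝕜 (PGen.l i)) 0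
  -- `r_{i+1} r_{i+2} = 0`
  | rr (i : ℕ) (h : i + 1 < k) : PRel 𝕜 k (ι 𝕜 (PGen.r i) * ι 𝕜 (PGen.r (i + 1))) 0
  -- `x₁ ℓ_k = 0`
  | xl (h : 0 < k) : PRel 𝕜 k (ι 𝕜 PGen.x * ι 𝕜 (PGen.l (k - 1))) 0
  -- `r_k x₁ = 0`
  | rx (h : 0 < k) : PRel 𝕜 k (ι 𝕜 (PGen.r (k - 1)) * ι 𝕜 PGen.x) 0

/-- The algebra `A₁,ₖ`. -/
abbrev PathAlg (𝕜 : Type) [CommRing 𝕜] (k : ℕ) := RingQuot (PRel 𝕜 k)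

variable (𝕜 : Type) [CommRing 𝕜] (k : ℕ)

/-- The idempotent `eᵢ` in `A₁,ₖ`. -/
noncomputable def eP (i : ℕ) : PathAlg 𝕜 k := RingQuot.mkAlgHom 𝕜 (PRel 𝕜 k) (ι 𝕜 (PGen.e i))

/-- The arrow `ℓ_{i+1} : i → i+1` in `A₁,ₖ`. -/
noncomputable def lP (i : ℕ) : PathAlg 𝕜 k := RingQuot.mkAlgHom 𝕜 (PRel 𝕜 k) (ι 𝕜 (PGen.l i))

/-- The arrow `r_{i+1} : i+1 → i` in `A₁,ₖ`. -/
noncomputable def rP (i : ℕ) : PathAlg 𝕜 k := RingQuot.mkAlgHom 𝕜 (PRel 𝕜 k) (ι 𝕜 (PGen.r i))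

/-- The loop `x₁` at vertex `k` in `A₁,ₖ`. -/
noncomputable def xP : PathAlg 𝕜 k := RingQuot.mkAlgHom 𝕜 (PRel 𝕜 k) (ι 𝕜 PGen.x)

open MvPolynomial

/-!
STATEMENT 12: For a field `k`, the corner algebra `eₖ A₁,ₖ eₖ` of endomorphisms of the
vertex `k` is isomorphic to `k[X₁,U_k]/(X₁U_k)` (with `X₁ ↦ x₁` and
`U_k ↦ ℓ_k r_k = r_k ℓ_k`, the endomorphism `Uₖ` of the vertex `k`), and
`e₀ A₁,ₖ e₀ ≅ k[U₁]` with `U₁ = r₁ℓ₁`.  We formalize the isomorphisms as injective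
multiplicative `k`-linear maps whose range is the corner `{a | e·a·e = a}` and which
send `1` to the corner idempotent.  In `MvPolynomial (Fin 2) 𝕜`, `X 0 = X₁` and
`X 1 = U_k`.
-/
namespace A1k

open FreeAlgebra

variable {𝕜 : Type} [Field 𝕜] {k : ℕ}

lemma rel {a b : FreeAlgebra 𝕜 PGen} (h : PRel 𝕜 k a b) :
    RingQuot.mkAlgHom 𝕜 (PRel 𝕜 k) a = RingQuot.mkAlgHom 𝕜 (PRel 𝕜 k) b :=
  RingQuot.mkAlgHom_rel 𝕜 h

lemma ee {i : ℕ} (h : i ≤ k) : eP 𝕜 k i * eP 𝕜 k i = eP 𝕜 k i := by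
  rw [eP, ← map_mul]; exact rel (PRel.e_idem i h)

lemma eo {i j : ℕ} (hi : i ≤ k) (hj : j ≤ k) (hij : i ≠ j) : eP 𝕜 k i * eP 𝕜 k j = 0 := by
  rw [eP, eP, ← map_mul]
  simpa using rel (PRel.e_orth i j hi hj hij)

lemma e_zero {i : ℕ} (h : k < i) : eP 𝕜 k i = 0 := by
  rw [eP]; simpa using rel (PRel.e_oob i h)

lemma sum_e : ∑ i ∈ Finset.range (k + 1), eP 𝕜 k i = (1 : PathAlg 𝕜 k) := by
  simp only [eP, ← map_sum]
  simpa using rel (PRel.e_sum (𝕜 := 𝕜) (k := k))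

lemma le' {i : ℕ} (h : i < k) : lP 𝕜 k i * eP 𝕜 k i = lP 𝕜 k i := by
  rw [lP, eP, ← map_mul]; exact rel (PRel.l_src i h)

lemma el {i : ℕ} (h : i < k) : eP 𝕜 k (i + 1) * lP 𝕜 k i = lP 𝕜 k i := by
  rw [lP, eP, ← map_mul]; exact rel (PRel.l_tgt i h)

lemma l_zero {i : ℕ} (h : k ≤ i) : lP 𝕜 k i = 0 := by
  rw [lP]; simpa using rel (PRel.l_oob i h)

lemma re' {i : ℕ} (h : i < k) : rP 𝕜 k i * eP 𝕜 k (i + 1) = rP 𝕜 k i := by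
  rw [rP, eP, ← map_mul]; exact rel (PRel.r_src i h)

lemma er {i : ℕ} (h : i < k) : eP 𝕜 k i * rP 𝕜 k i = rP 𝕜 k i := by
  rw [rP, eP, ← map_mul]; exact rel (PRel.r_tgt i h)

lemma r_zero {i : ℕ} (h : k ≤ i) : rP 𝕜 k i = 0 := by
  rw [rP]; simpa using rel (PRel.r_oob i h)

lemma exe : eP 𝕜 k k * xP 𝕜 k * eP 𝕜 k k = xP 𝕜 k := by
  rw [xP, eP, ← map_mul, ← map_mul]; exact rel PRel.x_vertex

lemma ll {i : ℕ} (h : i + 1 < k) : lP 𝕜 k (i + 1) * lP 𝕜 k i = 0 := by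
  rw [lP, lP, ← map_mul]; simpa using rel (PRel.ll i h)

lemma rr {i : ℕ} (h : i + 1 < k) : rP 𝕜 k i * rP 𝕜 k (i + 1) = 0 := by
  rw [rP, rP, ← map_mul]; simpa using rel (PRel.rr i h)

lemma xl (h : 0 < k) : xP 𝕜 k * lP 𝕜 k (k - 1) = 0 := by
  rw [xP, lP, ← map_mul]; simpa using rel (PRel.xl h)

lemma rx (h : 0 < k) : rP 𝕜 k (k - 1) * xP 𝕜 k = 0 := by
  rw [rP, xP, ← map_mul]; simpa using rel (PRel.rx h)

lemma ex : eP 𝕜 k k * xP 𝕜 k = xP 𝕜 k := by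
  conv_lhs => rw [← exe]
  rw [← mul_assoc, ← mul_assoc, ee le_rfl, exe]

lemma xe : xP 𝕜 k * eP 𝕜 k k = xP 𝕜 k := by
  conv_lhs => rw [← exe]
  rw [mul_assoc, ee le_rfl]
  exact exe

end A1k
namespace A1k

variable (𝕜 : Type) [Field 𝕜] (k : ℕ)

/-- The loop `u_i = r_i ℓ_i` at vertex `i` (for `i < k`). -/
noncomputable def uu (i : ℕ) : PathAlg 𝕜 k := rP 𝕜 k i * lP 𝕜 k i

/-- The loop `v_i = ℓ_i r_i` at vertex `i+1` (for `i < k`). -/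
noncomputable def vv (i : ℕ) : PathAlg 𝕜 k := lP 𝕜 k i * rP 𝕜 k i

variable {𝕜 k}

lemma uue {i : ℕ} (h : i < k) : uu 𝕜 k i * eP 𝕜 k i = uu 𝕜 k i := by
  rw [uu, mul_assoc, le' h]

lemma euu {i : ℕ} (h : i < k) : eP 𝕜 k i * uu 𝕜 k i = uu 𝕜 k i := by
  rw [uu, ← mul_assoc, er h]

lemma vve {i : ℕ} (h : i < k) : vv 𝕜 k i * eP 𝕜 k (i + 1) = vv 𝕜 k i := by
  rw [vv, mul_assoc, re' h]

lemma evv {i : ℕ} (h : i < k) : eP 𝕜 k (i + 1) * vv 𝕜 k i = vv 𝕜 k i := by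
  rw [vv, ← mul_assoc, el h]

section absorb
variable {A : Type} [Ring A]

lemma pow_absorb_right {a e : A} (h : a * e = a) (n : ℕ) : a ^ (n + 1) * e = a ^ (n + 1) := by
  rw [pow_succ, mul_assoc, h]

lemma pow_absorb_left {a e : A} (h : e * a = a) (n : ℕ) : e * a ^ (n + 1) = a ^ (n + 1) := by
  rw [pow_succ', ← mul_assoc, h]

end absorb

/-- swap: `ℓᵢ uᵢⁿ = vᵢⁿ ℓᵢ`. -/
lemma l_uu_pow {i : ℕ} (h : i < k) (n : ℕ) :
    lP 𝕜 k i * uu 𝕜 k i ^ n = vv 𝕜 k i ^ n * lP 𝕜 k i := by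
  induction n with
  | zero => rw [pow_zero, pow_zero, mul_one, one_mul]
  | succ n ih =>
    rw [pow_succ, ← mul_assoc, ih, pow_succ]
    rw [mul_assoc, mul_assoc, uu, vv, ← mul_assoc (lP 𝕜 k i)]

/-- swap: `rᵢ vᵢⁿ = uᵢⁿ rᵢ`. -/
lemma r_vv_pow {i : ℕ} (h : i < k) (n : ℕ) :
    rP 𝕜 k i * vv 𝕜 k i ^ n = uu 𝕜 k i ^ n * rP 𝕜 k i := by
  induction n with
  | zero => rw [pow_zero, pow_zero, mul_one, one_mul]
  | succ n ih =>
    rw [pow_succ, ← mul_assoc, ih, pow_succ]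
    rw [mul_assoc, mul_assoc, uu, vv, ← mul_assoc (rP 𝕜 k i)]

variable (𝕜 k)

/-- The spanning set of path elements of `A₁,ₖ`. -/
def SP : Set (PathAlg 𝕜 k) :=
  {a | (∃ i, i ≤ k ∧ a = eP 𝕜 k i)
    ∨ (∃ i n, i < k ∧ a = lP 𝕜 k i * uu 𝕜 k i ^ n)
    ∨ (∃ i n, i < k ∧ a = uu 𝕜 k i ^ n * rP 𝕜 k i)
    ∨ (∃ i n, i < k ∧ a = uu 𝕜 k i ^ (n + 1))
    ∨ (∃ i n, i < k ∧ a = vv 𝕜 k i ^ (n + 1))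
    ∨ (∃ n, a = xP 𝕜 k ^ (n + 1))}

variable {𝕜 k}

/-- Every element of `SP` is absorbed by a target idempotent on the left. -/
lemma SP_tgt {b : PathAlg 𝕜 k} (hb : b ∈ SP 𝕜 k) :
    ∃ t, t ≤ k ∧ eP 𝕜 k t * b = b := by
  rcases hb with ⟨i, hi, rfl⟩ | ⟨i, n, hi, rfl⟩ | ⟨i, n, hi, rfl⟩ | ⟨i, n, hi, rfl⟩ |
    ⟨i, n, hi, rfl⟩ | ⟨n, rfl⟩
  · exact ⟨i, hi, ee hi⟩
  · exact ⟨i + 1, hi, by rw [← mul_assoc, el hi]⟩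
  · refine ⟨i, le_of_lt hi, ?_⟩
    cases n with
    | zero => rw [pow_zero, one_mul, er hi]
    | succ n => rw [← mul_assoc, pow_absorb_left (euu hi) n]
  · exact ⟨i, le_of_lt hi, pow_absorb_left (euu hi) n⟩
  · exact ⟨i + 1, hi, pow_absorb_left (evv hi) n⟩
  · exact ⟨k, le_rfl, pow_absorb_left ex n⟩

/-- Every element of `SP` is absorbed by a source idempotent on the right. -/
lemma SP_src {b : PathAlg 𝕜 k} (hb : b ∈ SP 𝕜 k) :
    ∃ s, s ≤ k ∧ b * eP 𝕜 k s = b := by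
  rcases hb with ⟨i, hi, rfl⟩ | ⟨i, n, hi, rfl⟩ | ⟨i, n, hi, rfl⟩ | ⟨i, n, hi, rfl⟩ |
    ⟨i, n, hi, rfl⟩ | ⟨n, rfl⟩
  · exact ⟨i, hi, ee hi⟩
  · refine ⟨i, le_of_lt hi, ?_⟩
    cases n with
    | zero => rw [pow_zero, mul_one, le' hi]
    | succ n => rw [mul_assoc, pow_absorb_right (uue hi) n]
  · exact ⟨i + 1, hi, by rw [mul_assoc, re' hi]⟩
  · exact ⟨i, le_of_lt hi, pow_absorb_right (uue hi) n⟩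
  · exact ⟨i + 1, hi, pow_absorb_right (vve hi) n⟩
  · exact ⟨k, le_rfl, pow_absorb_right xe n⟩

/-- mismatched source/target gives zero. -/
lemma mismatch {g b : PathAlg 𝕜 k} {s t : ℕ} (hs : s ≤ k) (ht : t ≤ k) (hst : s ≠ t)
    (hg : g * eP 𝕜 k s = g) (hb : eP 𝕜 k t * b = b) : g * b = 0 := by
  rw [← hg, ← hb, mul_assoc, ← mul_assoc (eP 𝕜 k s), eo hs ht hst, zero_mul, mul_zero]

end A1k
namespace A1k

variable {𝕜 : Type} [Field 𝕜] {k : ℕ}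

lemma mem_E {i : ℕ} (hi : i ≤ k) : eP 𝕜 k i ∈ SP 𝕜 k := Or.inl ⟨i, hi, rfl⟩
lemma mem_A {i : ℕ} (hi : i < k) (n : ℕ) : lP 𝕜 k i * uu 𝕜 k i ^ n ∈ SP 𝕜 k :=
  Or.inr (Or.inl ⟨i, n, hi, rfl⟩)
lemma mem_B {i : ℕ} (hi : i < k) (n : ℕ) : uu 𝕜 k i ^ n * rP 𝕜 k i ∈ SP 𝕜 k :=
  Or.inr (Or.inr (Or.inl ⟨i, n, hi, rfl⟩))
lemma mem_U {i : ℕ} (hi : i < k) (n : ℕ) : uu 𝕜 k i ^ (n + 1) ∈ SP 𝕜 k :=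
  Or.inr (Or.inr (Or.inr (Or.inl ⟨i, n, hi, rfl⟩)))
lemma mem_D {i : ℕ} (hi : i < k) (n : ℕ) : vv 𝕜 k i ^ (n + 1) ∈ SP 𝕜 k :=
  Or.inr (Or.inr (Or.inr (Or.inr (Or.inl ⟨i, n, hi, rfl⟩))))
lemma mem_X (n : ℕ) : xP 𝕜 k ^ (n + 1) ∈ SP 𝕜 k :=
  Or.inr (Or.inr (Or.inr (Or.inr (Or.inr ⟨n, rfl⟩))))

lemma e_mul_SP (j : ℕ) {b : PathAlg 𝕜 k} (hb : b ∈ SP 𝕜 k) :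
    eP 𝕜 k j * b ∈ Submodule.span 𝕜 (SP 𝕜 k) := by
  by_cases hj : j ≤ k
  · obtain ⟨t, ht, habs⟩ := SP_tgt hb
    by_cases hjt : j = t
    · subst hjt; rw [habs]; exact Submodule.subset_span hb
    · rw [mismatch hj ht hjt (ee hj) habs]; exact Submodule.zero_mem _
  · rw [e_zero (by omega), zero_mul]; exact Submodule.zero_mem _

lemma l_mul_SP (j : ℕ) {b : PathAlg 𝕜 k} (hb : b ∈ SP 𝕜 k) :
    lP 𝕜 k j * b ∈ Submodule.span 𝕜 (SP 𝕜 k) := by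
  by_cases hj : j < k
  case neg => rw [l_zero (by omega), zero_mul]; exact Submodule.zero_mem _
  rcases hb with ⟨i, hi, rfl⟩ | ⟨i, n, hi, rfl⟩ | ⟨i, n, hi, rfl⟩ | ⟨i, n, hi, rfl⟩ |
    ⟨i, n, hi, rfl⟩ | ⟨n, rfl⟩
  · by_cases h : j = i
    · subst h; rw [le' hj]
      exact Submodule.subset_span (by simpa using mem_A hj 0)
    · rw [mismatch hj.le hi (fun hh => h hh) (le' hj) (ee hi)]; exact Submodule.zero_mem _
  · by_cases h : i + 1 = j
    · subst h
      rw [← mul_assoc, ll hj, zero_mul]; exact Submodule.zero_mem _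
    · rw [mismatch hj.le hi (fun hh => h hh.symm) (le' hj)
        (by rw [← mul_assoc, el hi])]
      exact Submodule.zero_mem _
  · by_cases h : j = i
    · subst h
      rw [← mul_assoc, l_uu_pow hj, mul_assoc]
      have hvv : lP 𝕜 k j * rP 𝕜 k j = vv 𝕜 k j := rfl
      rw [hvv, ← pow_succ]
      exact Submodule.subset_span (mem_D hj n)
    · have habs' : eP 𝕜 k i * (uu 𝕜 k i ^ n * rP 𝕜 k i) = uu 𝕜 k i ^ n * rP 𝕜 k i := by
        cases n with
        | zero => rw [pow_zero, one_mul, er hi]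
        | succ m => rw [← mul_assoc, pow_absorb_left (euu hi) m]
      rw [mismatch hj.le hi.le h (le' hj) habs']
      exact Submodule.zero_mem _
  · by_cases h : j = i
    · subst h; exact Submodule.subset_span (mem_A hj (n + 1))
    · rw [mismatch hj.le hi.le h (le' hj) (pow_absorb_left (euu hi) n)]
      exact Submodule.zero_mem _
  · by_cases h : i + 1 = j
    · subst h
      rw [pow_succ', vv, ← mul_assoc, ← mul_assoc, ll hj]
      simp only [zero_mul]
      exact Submodule.zero_mem _
    · rw [mismatch hj.le hi (fun hh => h hh.symm) (le' hj) (pow_absorb_left (evv hi) n)]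
      exact Submodule.zero_mem _
  · rw [mismatch hj.le le_rfl (Nat.ne_of_lt hj) (le' hj) (pow_absorb_left ex n)]
    exact Submodule.zero_mem _

lemma r_mul_SP (j : ℕ) {b : PathAlg 𝕜 k} (hb : b ∈ SP 𝕜 k) :
    rP 𝕜 k j * b ∈ Submodule.span 𝕜 (SP 𝕜 k) := by
  by_cases hj : j < k
  case neg => rw [r_zero (by omega), zero_mul]; exact Submodule.zero_mem _
  rcases hb with ⟨i, hi, rfl⟩ | ⟨i, n, hi, rfl⟩ | ⟨i, n, hi, rfl⟩ | ⟨i, n, hi, rfl⟩ |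
    ⟨i, n, hi, rfl⟩ | ⟨n, rfl⟩
  · by_cases h : i = j + 1
    · subst h; rw [re' hj]
      exact Submodule.subset_span (by simpa using mem_B hj 0)
    · rw [mismatch hj (‹i ≤ k›) (fun hh => h hh.symm) (re' hj) (ee hi)]
      exact Submodule.zero_mem _
  · by_cases h : j = i
    · subst h
      rw [← mul_assoc]
      have huu : rP 𝕜 k j * lP 𝕜 k j = uu 𝕜 k j := rfl
      rw [huu, ← pow_succ']
      exact Submodule.subset_span (mem_U hj n)
    · rw [mismatch hj hi (fun hh => by omega) (re' hj) (by rw [← mul_assoc, el hi])]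
      exact Submodule.zero_mem _
  · by_cases h : i = j + 1
    · subst h
      rw [← r_vv_pow hi, ← mul_assoc, rr hi]
      simp only [zero_mul]
      exact Submodule.zero_mem _
    · have habs' : eP 𝕜 k i * (uu 𝕜 k i ^ n * rP 𝕜 k i) = uu 𝕜 k i ^ n * rP 𝕜 k i := by
        cases n with
        | zero => rw [pow_zero, one_mul, er hi]
        | succ m => rw [← mul_assoc, pow_absorb_left (euu hi) m]
      rw [mismatch hj hi.le (fun hh => h hh.symm) (re' hj) habs']
      exact Submodule.zero_mem _
  · by_cases h : i = j + 1
    · subst h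
      rw [pow_succ', uu, ← mul_assoc, ← mul_assoc, rr hi]
      simp only [zero_mul]
      exact Submodule.zero_mem _
    · rw [mismatch hj hi.le (fun hh => h hh.symm) (re' hj) (pow_absorb_left (euu hi) n)]
      exact Submodule.zero_mem _
  · by_cases h : j = i
    · subst h
      rw [r_vv_pow hj]
      exact Submodule.subset_span (mem_B hj (n + 1))
    · rw [mismatch hj hi (fun hh => by omega) (re' hj) (pow_absorb_left (evv hi) n)]
      exact Submodule.zero_mem _
  · by_cases h : j + 1 = k
    · have hjk : j = k - 1 := by omega
      subst hjk
      rw [pow_succ', ← mul_assoc, rx (by omega), zero_mul]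
      exact Submodule.zero_mem _
    · rw [mismatch hj le_rfl h (re' hj) (pow_absorb_left ex n)]
      exact Submodule.zero_mem _

lemma x_mul_SP (hk : 0 < k) {b : PathAlg 𝕜 k} (hb : b ∈ SP 𝕜 k) :
    xP 𝕜 k * b ∈ Submodule.span 𝕜 (SP 𝕜 k) := by
  rcases hb with ⟨i, hi, rfl⟩ | ⟨i, n, hi, rfl⟩ | ⟨i, n, hi, rfl⟩ | ⟨i, n, hi, rfl⟩ |
    ⟨i, n, hi, rfl⟩ | ⟨n, rfl⟩
  · by_cases h : i = k
    · subst h; rw [xe]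
      exact Submodule.subset_span (by simpa using mem_X 0)
    · rw [mismatch le_rfl hi (fun hh => h hh.symm) xe (ee hi)]
      exact Submodule.zero_mem _
  · by_cases h : i + 1 = k
    · have : i = k - 1 := by omega
      subst this
      rw [← mul_assoc, xl hk, zero_mul]
      exact Submodule.zero_mem _
    · rw [mismatch le_rfl hi (fun hh => h hh.symm) xe (by rw [← mul_assoc, el hi])]
      exact Submodule.zero_mem _
  · have habs' : eP 𝕜 k i * (uu 𝕜 k i ^ n * rP 𝕜 k i) = uu 𝕜 k i ^ n * rP 𝕜 k i := by
      cases n with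
      | zero => rw [pow_zero, one_mul, er hi]
      | succ m => rw [← mul_assoc, pow_absorb_left (euu hi) m]
    rw [mismatch le_rfl hi.le (Nat.ne_of_gt hi) xe habs']
    exact Submodule.zero_mem _
  · rw [mismatch le_rfl hi.le (Nat.ne_of_gt hi) xe (pow_absorb_left (euu hi) n)]
    exact Submodule.zero_mem _
  · by_cases h : i + 1 = k
    · have : i = k - 1 := by omega
      subst this
      rw [pow_succ', vv, ← mul_assoc, ← mul_assoc, xl hk]
      simp only [zero_mul]
      exact Submodule.zero_mem _
    · rw [mismatch le_rfl hi (fun hh => h hh.symm) xe (pow_absorb_left (evv hi) n)]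
      exact Submodule.zero_mem _
  · rw [← pow_succ']
    exact Submodule.subset_span (mem_X (n + 1))

end A1k
namespace A1k

open FreeAlgebra

variable {𝕜 : Type} [Field 𝕜] {k : ℕ}

lemma one_mem_span : (1 : PathAlg 𝕜 k) ∈ Submodule.span 𝕜 (SP 𝕜 k) := by
  rw [← sum_e]
  exact Submodule.sum_mem _ fun i hi =>
    Submodule.subset_span (mem_E (Nat.lt_succ_iff.mp (Finset.mem_range.mp hi)))

lemma gen_mul_span {g m : PathAlg 𝕜 k} (hg : ∀ b ∈ SP 𝕜 k, g * b ∈ Submodule.span 𝕜 (SP 𝕜 k))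
    (hm : m ∈ Submodule.span 𝕜 (SP 𝕜 k)) : g * m ∈ Submodule.span 𝕜 (SP 𝕜 k) := by
  induction hm using Submodule.span_induction with
  | mem b hb => exact hg b hb
  | zero => rw [mul_zero]; exact Submodule.zero_mem _
  | add x y hx hy ihx ihy => rw [mul_add]; exact Submodule.add_mem _ ihx ihy
  | smul a x hx ih => rw [mul_smul_comm]; exact Submodule.smul_mem _ _ ih

lemma adjoin_gens_eq_top :
    Algebra.adjoin 𝕜 (Set.range fun g : PGen =>
      RingQuot.mkAlgHom 𝕜 (PRel 𝕜 k) (ι 𝕜 g)) = ⊤ := by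
  have h1 : (Set.range fun g : PGen => RingQuot.mkAlgHom 𝕜 (PRel 𝕜 k) (ι 𝕜 g)) =
      RingQuot.mkAlgHom 𝕜 (PRel 𝕜 k) '' Set.range (ι 𝕜) := by
    rw [← Set.range_comp]; rfl
  rw [h1, ← AlgHom.map_adjoin, FreeAlgebra.adjoin_range_ι, Algebra.map_top,
    AlgHom.range_eq_top]
  exact RingQuot.mkAlgHom_surjective 𝕜 _

theorem mem_span_SP (hk : 0 < k) (a : PathAlg 𝕜 k) : a ∈ Submodule.span 𝕜 (SP 𝕜 k) := by
  have key : ∀ a : PathAlg 𝕜 k, ∀ m ∈ Submodule.span 𝕜 (SP 𝕜 k),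
      a * m ∈ Submodule.span 𝕜 (SP 𝕜 k) := by
    intro a
    have ha : a ∈ Algebra.adjoin 𝕜 (Set.range fun g : PGen =>
        RingQuot.mkAlgHom 𝕜 (PRel 𝕜 k) (ι 𝕜 g)) := by
      rw [adjoin_gens_eq_top]; exact Algebra.mem_top
    induction ha using Algebra.adjoin_induction with
    | mem x hx =>
      obtain ⟨g, rfl⟩ := hx
      intro m hm
      refine gen_mul_span (fun b hb => ?_) hm
      cases g with
      | e i => exact e_mul_SP i hb
      | l i => exact l_mul_SP i hb
      | r i => exact r_mul_SP i hb
      | x => exact x_mul_SP hk hb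
    | algebraMap r =>
      intro m hm
      rw [Algebra.algebraMap_eq_smul_one, smul_mul_assoc, one_mul]
      exact Submodule.smul_mem _ _ hm
    | add x y hx hy ihx ihy =>
      intro m hm
      rw [add_mul]
      exact Submodule.add_mem _ (ihx m hm) (ihy m hm)
    | mul x y hx hy ihx ihy =>
      intro m hm
      rw [mul_assoc]
      exact ihx _ (ihy m hm)
  simpa using key a 1 one_mem_span

end A1k
namespace A1k

variable {𝕜 : Type} [Field 𝕜] {k : ℕ}

lemma A_src {i : ℕ} (hi : i < k) (n : ℕ) :
    lP 𝕜 k i * uu 𝕜 k i ^ n * eP 𝕜 k i = lP 𝕜 k i * uu 𝕜 k i ^ n := by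
  cases n with
  | zero => rw [pow_zero, mul_one, le' hi]
  | succ m => rw [mul_assoc, pow_absorb_right (uue hi) m]

lemma A_tgt {i : ℕ} (hi : i < k) (n : ℕ) :
    eP 𝕜 k (i + 1) * (lP 𝕜 k i * uu 𝕜 k i ^ n) = lP 𝕜 k i * uu 𝕜 k i ^ n := by
  rw [← mul_assoc, el hi]

lemma B_tgt {i : ℕ} (hi : i < k) (n : ℕ) :
    eP 𝕜 k i * (uu 𝕜 k i ^ n * rP 𝕜 k i) = uu 𝕜 k i ^ n * rP 𝕜 k i := by
  cases n with
  | zero => rw [pow_zero, one_mul, er hi]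
  | succ m => rw [← mul_assoc, pow_absorb_left (euu hi) m]

lemma B_src {i : ℕ} (hi : i < k) (n : ℕ) :
    uu 𝕜 k i ^ n * rP 𝕜 k i * eP 𝕜 k (i + 1) = uu 𝕜 k i ^ n * rP 𝕜 k i := by
  rw [mul_assoc, re' hi]

variable (𝕜 k)

/-- Corner basis at vertex `k` (for `k = j+1`). -/
def CK (j : ℕ) : Set (PathAlg 𝕜 k) :=
  {a | a = eP 𝕜 k k ∨ (∃ n, a = xP 𝕜 k ^ (n + 1)) ∨ (∃ n, a = vv 𝕜 k j ^ (n + 1))}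

/-- Corner basis at vertex `0`. -/
def C0 : Set (PathAlg 𝕜 k) :=
  {a | a = eP 𝕜 k 0 ∨ ∃ n, a = uu 𝕜 k 0 ^ (n + 1)}

variable {𝕜 k}

lemma corner_k_SP {j : ℕ} (hjk : j + 1 = k) {b : PathAlg 𝕜 k} (hb : b ∈ SP 𝕜 k) :
    eP 𝕜 k k * b * eP 𝕜 k k ∈ Submodule.span 𝕜 (CK 𝕜 k j) := by
  subst hjk
  rcases hb with ⟨i, hi, rfl⟩ | ⟨i, n, hi, rfl⟩ | ⟨i, n, hi, rfl⟩ | ⟨i, n, hi, rfl⟩ |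
    ⟨i, n, hi, rfl⟩ | ⟨n, rfl⟩
  · by_cases h : i = j + 1
    · subst h
      rw [ee le_rfl, ee le_rfl]
      exact Submodule.subset_span (Or.inl rfl)
    · rw [eo le_rfl hi (fun hh => h hh.symm), zero_mul]
      exact Submodule.zero_mem _
  · have h0 : lP 𝕜 (j + 1) i * uu 𝕜 (j + 1) i ^ n * eP 𝕜 (j + 1) (j + 1) = 0 := by
      rw [← A_src hi n, mul_assoc, eo hi.le le_rfl (Nat.ne_of_lt hi), mul_zero]
    rw [mul_assoc, h0, mul_zero]
    exact Submodule.zero_mem _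
  · have h0 : eP 𝕜 (j + 1) (j + 1) * (uu 𝕜 (j + 1) i ^ n * rP 𝕜 (j + 1) i) = 0 := by
      rw [← B_tgt hi n, ← mul_assoc, eo le_rfl hi.le (Nat.ne_of_gt hi), zero_mul]
    rw [h0, zero_mul]
    exact Submodule.zero_mem _
  · have h0 : eP 𝕜 (j + 1) (j + 1) * uu 𝕜 (j + 1) i ^ (n + 1) = 0 := by
      rw [← pow_absorb_left (euu hi) n, ← mul_assoc, eo le_rfl hi.le (Nat.ne_of_gt hi), zero_mul]
    rw [h0, zero_mul]
    exact Submodule.zero_mem _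
  · by_cases h : i = j
    · subst h
      rw [pow_absorb_left (evv hi) n, pow_absorb_right (vve hi) n]
      exact Submodule.subset_span (Or.inr (Or.inr ⟨n, rfl⟩))
    · have h0 : eP 𝕜 (j + 1) (j + 1) * vv 𝕜 (j + 1) i ^ (n + 1) = 0 := by
        rw [← pow_absorb_left (evv hi) n, ← mul_assoc, eo le_rfl hi (by omega), zero_mul]
      rw [h0, zero_mul]
      exact Submodule.zero_mem _
  · rw [pow_absorb_left ex n, pow_absorb_right xe n]
    exact Submodule.subset_span (Or.inr (Or.inl ⟨n, rfl⟩))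

lemma corner_0_SP (hk : 0 < k) {b : PathAlg 𝕜 k} (hb : b ∈ SP 𝕜 k) :
    eP 𝕜 k 0 * b * eP 𝕜 k 0 ∈ Submodule.span 𝕜 (C0 𝕜 k) := by
  rcases hb with ⟨i, hi, rfl⟩ | ⟨i, n, hi, rfl⟩ | ⟨i, n, hi, rfl⟩ | ⟨i, n, hi, rfl⟩ |
    ⟨i, n, hi, rfl⟩ | ⟨n, rfl⟩
  · by_cases h : i = 0
    · subst h
      rw [ee (Nat.zero_le _), ee (Nat.zero_le _)]
      exact Submodule.subset_span (Or.inl rfl)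
    · rw [eo (Nat.zero_le _) hi (fun hh => h hh.symm), zero_mul]
      exact Submodule.zero_mem _
  · have h0 : eP 𝕜 k 0 * (lP 𝕜 k i * uu 𝕜 k i ^ n) = 0 := by
      rw [← A_tgt hi n, ← mul_assoc, eo (Nat.zero_le _) hi (by omega), zero_mul]
    rw [h0, zero_mul]
    exact Submodule.zero_mem _
  · have h0 : uu 𝕜 k i ^ n * rP 𝕜 k i * eP 𝕜 k 0 = 0 := by
      rw [← B_src hi n, mul_assoc, eo hi (Nat.zero_le _) (by omega), mul_zero]
    rw [mul_assoc, h0, mul_zero]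
    exact Submodule.zero_mem _
  · by_cases h : i = 0
    · subst h
      rw [pow_absorb_left (euu hi) n, pow_absorb_right (uue hi) n]
      exact Submodule.subset_span (Or.inr ⟨n, rfl⟩)
    · have h0 : eP 𝕜 k 0 * uu 𝕜 k i ^ (n + 1) = 0 := by
        rw [← pow_absorb_left (euu hi) n, ← mul_assoc, eo (Nat.zero_le _) hi.le
          (fun hh => h hh.symm), zero_mul]
      rw [h0, zero_mul]
      exact Submodule.zero_mem _
  · have h0 : eP 𝕜 k 0 * vv 𝕜 k i ^ (n + 1) = 0 := by
      rw [← pow_absorb_left (evv hi) n, ← mul_assoc, eo (Nat.zero_le _) hi (by omega), zero_mul]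
    rw [h0, zero_mul]
    exact Submodule.zero_mem _
  · have h0 : eP 𝕜 k 0 * xP 𝕜 k ^ (n + 1) = 0 := by
      rw [← pow_absorb_left ex n, ← mul_assoc, eo (Nat.zero_le _) le_rfl (by omega), zero_mul]
    rw [h0, zero_mul]
    exact Submodule.zero_mem _

/-- every corner element at `k` lies in the span of the corner basis. -/
lemma corner_k_mem {j : ℕ} (hjk : j + 1 = k) {a : PathAlg 𝕜 k}
    (ha : eP 𝕜 k k * a * eP 𝕜 k k = a) : a ∈ Submodule.span 𝕜 (CK 𝕜 k j) := by
  have hk : 0 < k := by omega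
  set T : PathAlg 𝕜 k →ₗ[𝕜] PathAlg 𝕜 k :=
    (LinearMap.mulRight 𝕜 (eP 𝕜 k k)).comp (LinearMap.mulLeft 𝕜 (eP 𝕜 k k)) with hT
  have hTa : T a = a := ha
  have : a ∈ Submodule.map T (Submodule.span 𝕜 (SP 𝕜 k)) :=
    ⟨a, mem_span_SP hk a, hTa⟩
  rw [Submodule.map_span] at this
  refine Submodule.span_le.mpr ?_ this
  rintro _ ⟨b, hb, rfl⟩
  exact corner_k_SP hjk hb

lemma corner_0_mem (hk : 0 < k) {a : PathAlg 𝕜 k}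
    (ha : eP 𝕜 k 0 * a * eP 𝕜 k 0 = a) : a ∈ Submodule.span 𝕜 (C0 𝕜 k) := by
  set T : PathAlg 𝕜 k →ₗ[𝕜] PathAlg 𝕜 k :=
    (LinearMap.mulRight 𝕜 (eP 𝕜 k 0)).comp (LinearMap.mulLeft 𝕜 (eP 𝕜 k 0)) with hT
  have hTa : T a = a := ha
  have : a ∈ Submodule.map T (Submodule.span 𝕜 (SP 𝕜 k)) :=
    ⟨a, mem_span_SP hk a, hTa⟩
  rw [Submodule.map_span] at this
  refine Submodule.span_le.mpr ?_ this
  rintro _ ⟨b, hb, rfl⟩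
  exact corner_0_SP hk hb

end A1k
namespace A1k

open FreeAlgebra Matrix

variable (𝕜 : Type) [Field 𝕜] (k : ℕ)

/-- coefficient ring for the representation -/
abbrev RR := Polynomial 𝕜 × Polynomial 𝕜

/-- matrix algebra for the representation -/
abbrev Mat := Matrix (Fin (k + 1)) (Fin (k + 1)) (RR 𝕜)

noncomputable def aC (i : ℕ) : RR 𝕜 :=
  if (k - 1 - i) % 2 = 0 then (0, Polynomial.X) else (Polynomial.X, 0)

noncomputable def bC (i : ℕ) : RR 𝕜 :=
  if (k - 1 - i) % 2 = 0 then (0, 1) else (1, 0)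

variable {𝕜 k}

lemma aa {i : ℕ} (h : i + 1 < k) : aC 𝕜 k (i + 1) * aC 𝕜 k i = 0 := by
  unfold aC
  by_cases h3 : (k - 1 - (i + 1)) % 2 = 0
  · rw [if_pos h3, if_neg (by omega)]
    simp [Prod.ext_iff]
  · rw [if_neg h3, if_pos (by omega)]
    simp [Prod.ext_iff]

lemma bb {i : ℕ} (h : i + 1 < k) : bC 𝕜 k i * bC 𝕜 k (i + 1) = 0 := by
  unfold bC
  by_cases h3 : (k - 1 - (i + 1)) % 2 = 0
  · rw [if_pos h3, if_neg (by omega)]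
    simp [Prod.ext_iff]
  · rw [if_neg h3, if_pos (by omega)]
    simp [Prod.ext_iff]

lemma aC_last (h : 0 < k) : aC 𝕜 k (k - 1) = (0, Polynomial.X) := by
  unfold aC; rw [if_pos (by omega)]

lemma bC_last (h : 0 < k) : bC 𝕜 k (k - 1) = (0, 1) := by
  unfold bC; rw [if_pos (by omega)]

variable (𝕜 k)

noncomputable def gfun : PGen → Mat 𝕜 k
  | .e i => if h : i < k + 1 then Matrix.single ⟨i, h⟩ ⟨i, h⟩ 1 else 0
  | .l i => if h : i < k then
      Matrix.single ⟨i + 1, by omega⟩ ⟨i, by omega⟩ (aC 𝕜 k i) else 0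
  | .r i => if h : i < k then
      Matrix.single ⟨i, by omega⟩ ⟨i + 1, by omega⟩ (bC 𝕜 k i) else 0
  | .x => Matrix.single ⟨k, by omega⟩ ⟨k, by omega⟩ ((Polynomial.X, 0) : RR 𝕜)

noncomputable def F0 : FreeAlgebra 𝕜 PGen →ₐ[𝕜] Mat 𝕜 k := FreeAlgebra.lift 𝕜 (gfun 𝕜 k)

lemma F0_rel : ∀ ⦃a b : FreeAlgebra 𝕜 PGen⦄, PRel 𝕜 k a b → F0 𝕜 k a = F0 𝕜 k b := by
  intro a b h
  induction h with
  | e_idem i h =>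
    simp only [F0, _root_.map_mul, lift_ι_apply, gfun, dif_pos (by omega : i < k + 1)]
    rw [Matrix.single_mul_single_same, one_mul]
  | e_orth i j hi hj hij =>
    simp only [F0, _root_.map_mul, lift_ι_apply, gfun, dif_pos (by omega : i < k + 1),
      dif_pos (by omega : j < k + 1), _root_.map_zero]
    have hne : (⟨i, by omega⟩ : Fin (k + 1)) ≠ ⟨j, by omega⟩ :=
      fun hf => hij (congrArg Fin.val hf)
    rw [Matrix.single_mul_single_of_ne (h := hne)]
  | e_sum =>
    simp only [F0, map_sum, lift_ι_apply, _root_.map_one]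
    have hrw : ∀ i ∈ Finset.range (k + 1), gfun 𝕜 k (PGen.e i) =
        fun a b : Fin (k+1) => if i = a.val ∧ i = b.val then (1 : RR 𝕜) else 0 := by
      intro i hi
      have hi' : i < k + 1 := Finset.mem_range.mp hi
      funext a b
      simp only [gfun, dif_pos hi', Matrix.single, of_apply]
      congr 1
      simp [Fin.ext_iff, eq_comm]
    refine Matrix.ext fun a b => ?_
    rw [Matrix.sum_apply]
    calc ∑ i ∈ Finset.range (k + 1), gfun 𝕜 k (PGen.e i) a b
        = ∑ i ∈ Finset.range (k + 1), (if i = a.val ∧ i = b.val then (1 : RR 𝕜) else 0) := by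
          exact Finset.sum_congr rfl fun i hi => by rw [hrw i hi]
      _ = (1 : Mat 𝕜 k) a b := by
          by_cases hab : a = b
          · subst hab
            rw [Matrix.one_apply_eq, Finset.sum_eq_single_of_mem a.val
              (Finset.mem_range.mpr a.isLt)]
            · simp
            · intro i hi hne; simp [hne]
          · rw [Matrix.one_apply_ne hab]
            apply Finset.sum_eq_zero
            intro i hi
            have hcond : ¬(i = a.val ∧ i = b.val) := fun ⟨h1, h2⟩ => hab (Fin.ext (by omega))
            simp [hcond]
  | e_oob i h =>
    simp only [F0, lift_ι_apply, gfun, dif_neg (by omega : ¬ i < k + 1), _root_.map_zero]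
  | l_src i h =>
    simp only [F0, _root_.map_mul, lift_ι_apply, gfun, dif_pos h, dif_pos (by omega : i < k + 1)]
    rw [Matrix.single_mul_single_same, mul_one]
  | l_tgt i h =>
    simp only [F0, _root_.map_mul, lift_ι_apply, gfun, dif_pos h, dif_pos (by omega : i + 1 < k + 1)]
    rw [Matrix.single_mul_single_same, one_mul]
  | l_oob i h =>
    simp only [F0, lift_ι_apply, gfun, dif_neg (by omega : ¬ i < k), _root_.map_zero]
  | r_src i h =>
    simp only [F0, _root_.map_mul, lift_ι_apply, gfun, dif_pos h, dif_pos (by omega : i + 1 < k + 1)]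
    rw [Matrix.single_mul_single_same, mul_one]
  | r_tgt i h =>
    simp only [F0, _root_.map_mul, lift_ι_apply, gfun, dif_pos h, dif_pos (by omega : i < k + 1)]
    rw [Matrix.single_mul_single_same, one_mul]
  | r_oob i h =>
    simp only [F0, lift_ι_apply, gfun, dif_neg (by omega : ¬ i < k), _root_.map_zero]
  | x_vertex =>
    simp only [F0, _root_.map_mul, lift_ι_apply, gfun, dif_pos (by omega : k < k + 1)]
    rw [Matrix.single_mul_single_same, Matrix.single_mul_single_same, one_mul, mul_one]
  | ll i h =>
    simp only [F0, _root_.map_mul, lift_ι_apply, gfun, dif_pos h, dif_pos (by omega : i < k),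
      _root_.map_zero]
    rw [Matrix.single_mul_single_same, aa h, Matrix.single_zero]
  | rr i h =>
    simp only [F0, _root_.map_mul, lift_ι_apply, gfun, dif_pos h, dif_pos (by omega : i < k),
      _root_.map_zero]
    rw [Matrix.single_mul_single_same, bb h, Matrix.single_zero]
  | xl h =>
    simp only [F0, _root_.map_mul, lift_ι_apply, gfun, dif_pos (by omega : k - 1 < k),
      _root_.map_zero]
    simp only [Nat.sub_add_cancel h]
    rw [Matrix.single_mul_single_same, aC_last h]
    simp [Prod.ext_iff]
    exact Matrix.single_zero _ _
  | rx h =>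
    simp only [F0, _root_.map_mul, lift_ι_apply, gfun, dif_pos (by omega : k - 1 < k),
      _root_.map_zero]
    simp only [Nat.sub_add_cancel h]
    rw [Matrix.single_mul_single_same, bC_last h]
    simp [Prod.ext_iff]
    exact Matrix.single_zero _ _

/-- The representation of `A₁,ₖ` on `⊕ᵢ (𝕜[s] × 𝕜[t])`. -/
noncomputable def ρ : PathAlg 𝕜 k →ₐ[𝕜] Mat 𝕜 k :=
  RingQuot.liftAlgHom 𝕜 ⟨F0 𝕜 k, F0_rel 𝕜 k⟩

variable {𝕜 k}

lemma rho_e {i : ℕ} (h : i ≤ k) :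
    ρ 𝕜 k (eP 𝕜 k i) = Matrix.single ⟨i, by omega⟩ ⟨i, by omega⟩ (1 : RR 𝕜) := by
  rw [ρ, eP, RingQuot.liftAlgHom_mkAlgHom_apply, F0, lift_ι_apply, gfun,
    dif_pos (by omega : i < k + 1)]

lemma rho_l {i : ℕ} (h : i < k) :
    ρ 𝕜 k (lP 𝕜 k i) = Matrix.single ⟨i + 1, by omega⟩ ⟨i, by omega⟩ (aC 𝕜 k i) := by
  rw [ρ, lP, RingQuot.liftAlgHom_mkAlgHom_apply, F0, lift_ι_apply, gfun, dif_pos h]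

lemma rho_r {i : ℕ} (h : i < k) :
    ρ 𝕜 k (rP 𝕜 k i) = Matrix.single ⟨i, by omega⟩ ⟨i + 1, by omega⟩ (bC 𝕜 k i) := by
  rw [ρ, rP, RingQuot.liftAlgHom_mkAlgHom_apply, F0, lift_ι_apply, gfun, dif_pos h]

lemma rho_x :
    ρ 𝕜 k (xP 𝕜 k) = Matrix.single ⟨k, by omega⟩ ⟨k, by omega⟩ ((Polynomial.X, 0) : RR 𝕜) := by
  rw [ρ, xP, RingQuot.liftAlgHom_mkAlgHom_apply, F0, lift_ι_apply, gfun]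

end A1k
namespace A1k

open Matrix MvPolynomial

variable {𝕜 : Type} [Field 𝕜] {k : ℕ}

lemma xd : xP 𝕜 k * vv 𝕜 k (k - 1) = 0 := by
  rcases Nat.eq_zero_or_pos k with h | h
  · subst h; rw [vv, l_zero le_rfl, zero_mul, mul_zero]
  · rw [vv, ← mul_assoc, xl h, zero_mul]

lemma dx : vv 𝕜 k (k - 1) * xP 𝕜 k = 0 := by
  rcases Nat.eq_zero_or_pos k with h | h
  · subst h; rw [vv, l_zero le_rfl, zero_mul, zero_mul]
  · rw [vv, mul_assoc, rx h, mul_zero]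

lemma commute_dx : Commute (vv 𝕜 k (k - 1)) (xP 𝕜 k) := by
  show _ = _
  rw [dx, xd]

lemma commute_aeval_x (a : Polynomial 𝕜) :
    Commute ((Polynomial.aeval (vv 𝕜 k (k - 1))) a) (xP 𝕜 k) := by
  induction a using Polynomial.induction_on' with
  | add p q hp hq => rw [_root_.map_add]; exact hp.add_left hq
  | monomial n c =>
    rw [Polynomial.aeval_monomial]
    exact (Commute.mul_left (Algebra.commutes c (xP 𝕜 k)) (commute_dx.pow_left n))

variable (𝕜 k)

/-- `X₁ ↦ x₁`, `U ↦ ℓₖrₖ`, as an algebra map `𝕜[X₁,U] → A₁,ₖ`. -/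
noncomputable def PhiT : MvPolynomial (Fin 2) 𝕜 →ₐ[𝕜] PathAlg 𝕜 k :=
  (Polynomial.eval₂AlgHom (Polynomial.aeval (vv 𝕜 k (k - 1))) (xP 𝕜 k)
    commute_aeval_x).comp
    (aeval ![Polynomial.X, Polynomial.C Polynomial.X])

variable {𝕜 k}

lemma PhiT_X0 : PhiT 𝕜 k (X 0) = xP 𝕜 k := by
  rw [PhiT, AlgHom.coe_comp, Function.comp_apply, aeval_X]
  simp only [Matrix.cons_val_zero]
  exact Polynomial.eval₂_X _ _

lemma PhiT_X1 : PhiT 𝕜 k (X 1) = vv 𝕜 k (k - 1) := by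
  rw [PhiT, AlgHom.coe_comp, Function.comp_apply, aeval_X]
  simp only [Matrix.cons_val_one, Matrix.head_cons, Matrix.cons_val_zero]
  have : (Polynomial.eval₂AlgHom (Polynomial.aeval (vv 𝕜 k (k - 1))) (xP 𝕜 k)
      commute_aeval_x) (Polynomial.C Polynomial.X) =
      (Polynomial.aeval (vv 𝕜 k (k - 1))) Polynomial.X := Polynomial.eval₂_C _ _
  rw [this, Polynomial.aeval_X]

/-- the mirror evaluation map for the corner at `k` -/
noncomputable def piK (K : Type) [Field K] : MvPolynomial (Fin 2) K →ₐ[K] RR K :=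
  aeval ![((Polynomial.X : Polynomial K), 0), (0, Polynomial.X)]

lemma corner_std {z : Fin (k + 1)} (c : 𝕜) (r : RR 𝕜) :
    Matrix.single z z (1 : RR 𝕜) *
        (c • ((1 : Mat 𝕜 k) - Matrix.single z z 1) + Matrix.single z z r) *
      Matrix.single z z 1 = Matrix.single z z r := by
  rw [mul_add, mul_smul_comm, mul_sub, mul_one, Matrix.single_mul_single_same, one_mul, sub_self,
    smul_zero, zero_add, Matrix.single_mul_single_same, one_mul, Matrix.single_mul_single_same, mul_one]

lemma rho_vv (hk : 0 < k) :
    ρ 𝕜 k (vv 𝕜 k (k - 1)) =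
      Matrix.single ⟨k, by omega⟩ ⟨k, by omega⟩ (((0 : Polynomial 𝕜), Polynomial.X) : RR 𝕜) := by
  rw [vv, _root_.map_mul, rho_l (by omega : k - 1 < k), rho_r (by omega : k - 1 < k)]
  simp only [Nat.sub_add_cancel hk]
  rw [Matrix.single_mul_single_same, aC_last hk, bC_last hk]
  norm_num

lemma rho_Phi (hk : 0 < k) (p : MvPolynomial (Fin 2) 𝕜) :
    ρ 𝕜 k (PhiT 𝕜 k p) =
      (constantCoeff p) •
          ((1 : Mat 𝕜 k) - Matrix.single ⟨k, by omega⟩ ⟨k, by omega⟩ 1) +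
        Matrix.single ⟨k, by omega⟩ ⟨k, by omega⟩ (piK 𝕜 p) := by
  induction p using MvPolynomial.induction_on with
  | C a =>
    have e1 : PhiT 𝕜 k (C a) = algebraMap 𝕜 (PathAlg 𝕜 k) a := by
      rw [← algebraMap_eq]; exact (PhiT 𝕜 k).commutes a
    have e2 : piK 𝕜 (C a) = algebraMap 𝕜 (RR 𝕜) a := by
      rw [← algebraMap_eq]; exact (piK 𝕜).commutes a
    rw [e1, e2, AlgHom.commutes, constantCoeff_C,
      Algebra.algebraMap_eq_smul_one, Algebra.algebraMap_eq_smul_one,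
      ← Matrix.smul_single, ← smul_add, sub_add_cancel]
  | add p q ihp ihq =>
    rw [_root_.map_add, _root_.map_add, ihp, ihq, _root_.map_add, _root_.map_add,
      Matrix.single_add, add_smul]
    abel
  | mul_X p n ih =>
    have hX : ρ 𝕜 k (PhiT 𝕜 k (X n)) =
        Matrix.single ⟨k, by omega⟩ ⟨k, by omega⟩ (piK 𝕜 (X n)) := by
      fin_cases n
      · rw [show ((⟨0, by omega⟩ : Fin 2)) = 0 from rfl, PhiT_X0, piK, aeval_X]
        simp only [Matrix.cons_val_zero]
        exact rho_x
      · rw [show ((⟨1, by omega⟩ : Fin 2)) = 1 from rfl, PhiT_X1, piK, aeval_X]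
        simp only [Matrix.cons_val_one, Matrix.head_cons]
        exact rho_vv hk
    rw [_root_.map_mul, _root_.map_mul, ih, hX, add_mul, smul_mul_assoc, sub_mul, one_mul,
      Matrix.single_mul_single_same, one_mul, sub_self, smul_zero, zero_add,
      Matrix.single_mul_single_same, _root_.map_mul constantCoeff, constantCoeff_X, mul_zero, zero_smul,
      zero_add, _root_.map_mul (piK 𝕜)]

lemma piK_eq_zero (hk : 0 < k) {p : MvPolynomial (Fin 2) 𝕜}
    (h : eP 𝕜 k k * PhiT 𝕜 k p * eP 𝕜 k k = 0) :
    piK 𝕜 p = 0 := by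
  have h2 := congrArg (ρ 𝕜 k) h
  rw [_root_.map_mul, _root_.map_mul, _root_.map_zero, rho_e le_rfl, rho_Phi hk,
    corner_std] at h2
  have h3 := congrFun (congrFun h2 ⟨k, by omega⟩) ⟨k, by omega⟩
  rwa [Matrix.single_apply_same, Matrix.zero_apply] at h3

lemma dvd_X1 {p : MvPolynomial (Fin 2) 𝕜}
    (h : aeval ![(Polynomial.X : Polynomial 𝕜), 0] p = 0) :
    (X 1 : MvPolynomial (Fin 2) 𝕜) ∣ p := by
  have key : ∀ q : MvPolynomial (Fin 2) 𝕜,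
      (X 1 : MvPolynomial (Fin 2) 𝕜) ∣ (q - aeval ![X 0, 0] q) := by
    intro q
    induction q using MvPolynomial.induction_on with
    | C a => rw [aeval_C]; simp [algebraMap_eq]
    | add p q ihp ihq =>
      rw [_root_.map_add]
      have h2 := dvd_add ihp ihq
      convert h2 using 1
      ring
    | mul_X q n ih =>
      rw [_root_.map_mul, aeval_X]
      fin_cases n
      · simp only [Fin.mk_zero, Matrix.cons_val_zero]
        have h2 := ih.mul_right (X 0 : MvPolynomial (Fin 2) 𝕜)
        convert h2 using 1
        ring
      · simp only [Fin.mk_one, Matrix.cons_val_one, Matrix.head_cons, Matrix.cons_val_zero, mul_zero, sub_zero]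
        exact dvd_mul_left _ _
  have hcomp : (Polynomial.aeval (X 0 : MvPolynomial (Fin 2) 𝕜)).comp
      (aeval ![(Polynomial.X : Polynomial 𝕜), 0]) =
      aeval ![(X 0 : MvPolynomial (Fin 2) 𝕜), 0] := by
    apply MvPolynomial.algHom_ext
    intro i
    fin_cases i <;> simp
  have hτ : aeval ![(X 0 : MvPolynomial (Fin 2) 𝕜), 0] p = 0 := by
    rw [← hcomp, AlgHom.coe_comp, Function.comp_apply, h, _root_.map_zero]
  have h3 := key p
  rwa [hτ, sub_zero] at h3

lemma dvd_X0 {p : MvPolynomial (Fin 2) 𝕜}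
    (h : aeval ![0, (Polynomial.X : Polynomial 𝕜)] p = 0) :
    (X 0 : MvPolynomial (Fin 2) 𝕜) ∣ p := by
  have key : ∀ q : MvPolynomial (Fin 2) 𝕜,
      (X 0 : MvPolynomial (Fin 2) 𝕜) ∣ (q - aeval ![0, X 1] q) := by
    intro q
    induction q using MvPolynomial.induction_on with
    | C a => rw [aeval_C]; simp [algebraMap_eq]
    | add p q ihp ihq =>
      rw [_root_.map_add]
      have h2 := dvd_add ihp ihq
      convert h2 using 1
      ring
    | mul_X q n ih =>
      rw [_root_.map_mul, aeval_X]
      fin_cases n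
      · simp only [Fin.mk_zero, Matrix.cons_val_zero, mul_zero, sub_zero]
        exact dvd_mul_left _ _
      · simp only [Fin.mk_one, Matrix.cons_val_one, Matrix.head_cons, Matrix.cons_val_zero]
        have h2 := ih.mul_right (X 1 : MvPolynomial (Fin 2) 𝕜)
        convert h2 using 1
        ring
  have hcomp : (Polynomial.aeval (X 1 : MvPolynomial (Fin 2) 𝕜)).comp
      (aeval ![0, (Polynomial.X : Polynomial 𝕜)]) =
      aeval ![0, (X 1 : MvPolynomial (Fin 2) 𝕜)] := by
    apply MvPolynomial.algHom_ext
    intro i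
    fin_cases i <;> simp
  have hτ : aeval ![0, (X 1 : MvPolynomial (Fin 2) 𝕜)] p = 0 := by
    rw [← hcomp, AlgHom.coe_comp, Function.comp_apply, h, _root_.map_zero]
  have h3 := key p
  rwa [hτ, sub_zero] at h3

lemma piK_ker {p : MvPolynomial (Fin 2) 𝕜} (h : piK 𝕜 p = 0) :
    p ∈ Ideal.span {(X 0 : MvPolynomial (Fin 2) 𝕜) * X 1} := by
  have h1 : aeval ![(Polynomial.X : Polynomial 𝕜), 0] p = 0 := by
    have h2 := congrArg (AlgHom.fst 𝕜 (Polynomial 𝕜) (Polynomial 𝕜)) h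
    rw [_root_.map_zero, piK, comp_aeval_apply] at h2
    have hfun : (fun i => (AlgHom.fst 𝕜 (Polynomial 𝕜) (Polynomial 𝕜))
        (![((Polynomial.X : Polynomial 𝕜), 0), (0, Polynomial.X)] i)) =
        ![(Polynomial.X : Polynomial 𝕜), 0] := by
      funext i; fin_cases i <;> rfl
    rwa [hfun] at h2
  have h2 : aeval ![0, (Polynomial.X : Polynomial 𝕜)] p = 0 := by
    have h2 := congrArg (AlgHom.snd 𝕜 (Polynomial 𝕜) (Polynomial 𝕜)) h
    rw [_root_.map_zero, piK, comp_aeval_apply] at h2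
    have hfun : (fun i => (AlgHom.snd 𝕜 (Polynomial 𝕜) (Polynomial 𝕜))
        (![((Polynomial.X : Polynomial 𝕜), 0), (0, Polynomial.X)] i)) =
        ![0, (Polynomial.X : Polynomial 𝕜)] := by
      funext i; fin_cases i <;> rfl
    rwa [hfun] at h2
  obtain ⟨q, rfl⟩ := dvd_X1 h1
  rw [_root_.map_mul, aeval_X] at h2
  simp only [Matrix.cons_val_one, Matrix.head_cons] at h2
  have h2' : aeval ![0, (Polynomial.X : Polynomial 𝕜)] q = 0 := by
    rcases mul_eq_zero.mp h2 with hc | hc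
    · exact absurd hc Polynomial.X_ne_zero
    · exact hc
  obtain ⟨q', rfl⟩ := dvd_X0 h2'
  exact Ideal.mem_span_singleton.mpr ⟨q', by ring⟩

end A1k
namespace A1k

open Matrix

variable {𝕜 : Type} [Field 𝕜] {k : ℕ}

lemma corner_mul {A : Type} [Ring A] (e P Q : A) (he : e * e = e) (hQ : e * Q = Q * e) :
    (e * P * e) * (e * Q * e) = e * (P * Q) * e := by
  rw [mul_assoc (e * P) e (e * Q * e), ← mul_assoc e (e * Q) e, ← mul_assoc e e Q, he, hQ,
    mul_assoc Q e e, he, ← mul_assoc (e * P) Q e, mul_assoc e P Q]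

lemma corner_idem {A : Type} [Ring A] (e P : A) (he : e * e = e) :
    e * (e * P * e) * e = e * P * e := by
  rw [← mul_assoc e (e * P) e, ← mul_assoc e e P, he, mul_assoc (e * P) e e, he]

lemma std_pow {z : Fin (k + 1)} (w : RR 𝕜) (n : ℕ) :
    (Matrix.single z z w) ^ (n + 1) = Matrix.single z z (w ^ (n + 1)) := by
  induction n with
  | zero => rw [pow_one, pow_one]
  | succ m ih => rw [pow_succ, ih, Matrix.single_mul_single_same, ← pow_succ]

lemma rho_u (hk : 0 < k) :
    ρ 𝕜 k (uu 𝕜 k 0) = Matrix.single ⟨0, by omega⟩ ⟨0, by omega⟩ (bC 𝕜 k 0 * aC 𝕜 k 0) := by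
  rw [uu, _root_.map_mul, rho_r hk, rho_l hk, Matrix.single_mul_single_same]

lemma rho_Psi (hk : 0 < k) (p : Polynomial 𝕜) :
    ρ 𝕜 k (Polynomial.aeval (uu 𝕜 k 0) p) =
      (p.coeff 0) • ((1 : Mat 𝕜 k) - Matrix.single ⟨0, by omega⟩ ⟨0, by omega⟩ 1) +
        Matrix.single ⟨0, by omega⟩ ⟨0, by omega⟩
          (Polynomial.aeval (bC 𝕜 k 0 * aC 𝕜 k 0) p) := by
  induction p using Polynomial.induction_on' with
  | add p q ihp ihq =>
    rw [_root_.map_add, _root_.map_add, ihp, ihq, Polynomial.coeff_add, _root_.map_add,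
      Matrix.single_add, add_smul]
    abel
  | monomial n a =>
    rw [Polynomial.aeval_monomial, Polynomial.aeval_monomial, _root_.map_mul, AlgHom.commutes,
      map_pow, rho_u hk, Polynomial.coeff_monomial]
    cases n with
    | zero =>
      rw [pow_zero, mul_one, pow_zero, mul_one, if_pos rfl,
        Algebra.algebraMap_eq_smul_one, Algebra.algebraMap_eq_smul_one,
        ← Matrix.smul_single, ← smul_add, sub_add_cancel]
    | succ m =>
      rw [if_neg (by omega), zero_smul, zero_add, std_pow, ← Algebra.smul_def,
        ← Algebra.smul_def, Matrix.smul_single]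

lemma key_0 (hk : 0 < k) {p : Polynomial 𝕜}
    (h : eP 𝕜 k 0 * Polynomial.aeval (uu 𝕜 k 0) p * eP 𝕜 k 0 = 0) :
    Polynomial.aeval (bC 𝕜 k 0 * aC 𝕜 k 0 : RR 𝕜) p = 0 := by
  have h2 := congrArg (ρ 𝕜 k) h
  rw [_root_.map_mul, _root_.map_mul, _root_.map_zero, rho_e (Nat.zero_le k), rho_Psi hk,
    corner_std] at h2
  have h3 := congrFun (congrFun h2 ⟨0, by omega⟩) ⟨0, by omega⟩
  rwa [Matrix.single_apply_same, Matrix.zero_apply] at h3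

lemma aeval_w_inj {p : Polynomial 𝕜}
    (h : Polynomial.aeval (bC 𝕜 k 0 * aC 𝕜 k 0 : RR 𝕜) p = 0) : p = 0 := by
  have hw : bC 𝕜 k 0 * aC 𝕜 k 0 = (((0 : Polynomial 𝕜), Polynomial.X) : RR 𝕜) ∨
      bC 𝕜 k 0 * aC 𝕜 k 0 = ((Polynomial.X, 0) : RR 𝕜) := by
    unfold bC aC
    by_cases h3 : (k - 1 - 0) % 2 = 0
    · left; rw [if_pos h3, if_pos h3]; norm_num
    · right; rw [if_neg h3, if_neg h3]; norm_num
  rcases hw with hw | hw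
  · have h2 := congrArg (AlgHom.snd 𝕜 (Polynomial 𝕜) (Polynomial 𝕜)) h
    rw [_root_.map_zero, ← Polynomial.aeval_algHom_apply, hw,
      show (AlgHom.snd 𝕜 (Polynomial 𝕜) (Polynomial 𝕜))
        (((0 : Polynomial 𝕜), Polynomial.X) : RR 𝕜) = Polynomial.X from rfl] at h2
    rwa [Polynomial.aeval_X_left_apply] at h2
  · have h2 := congrArg (AlgHom.fst 𝕜 (Polynomial 𝕜) (Polynomial 𝕜)) h
    rw [_root_.map_zero, ← Polynomial.aeval_algHom_apply, hw,
      show (AlgHom.fst 𝕜 (Polynomial 𝕜) (Polynomial 𝕜))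
        ((Polynomial.X, (0 : Polynomial 𝕜)) : RR 𝕜) = Polynomial.X from rfl] at h2
    rwa [Polynomial.aeval_X_left_apply] at h2

end A1k
set_option maxHeartbeats 1600000 in
theorem stmt_12 (𝕜 : Type) [Field 𝕜] (k : ℕ) (hk : 1 ≤ k) :
    (∃ φ : (MvPolynomial (Fin 2) 𝕜 ⧸
        Ideal.span {(X 0 : MvPolynomial (Fin 2) 𝕜) * X 1}) →ₗ[𝕜] PathAlg 𝕜 k,
      Function.Injective φ ∧
      φ 1 = eP 𝕜 k k ∧
      (∀ p q, φ (p * q) = φ p * φ q) ∧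
      φ (Ideal.Quotient.mk _ (X 0)) = xP 𝕜 k ∧
      φ (Ideal.Quotient.mk _ (X 1)) = lP 𝕜 k (k - 1) * rP 𝕜 k (k - 1) ∧
      Set.range φ = {a : PathAlg 𝕜 k | eP 𝕜 k k * a * eP 𝕜 k k = a}) ∧
    (∃ ψ : Polynomial 𝕜 →ₗ[𝕜] PathAlg 𝕜 k,
      Function.Injective ψ ∧
      ψ 1 = eP 𝕜 k 0 ∧
      (∀ p q, ψ (p * q) = ψ p * ψ q) ∧
      ψ Polynomial.X = rP 𝕜 k 0 * lP 𝕜 k 0 ∧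
      Set.range ψ = {a : PathAlg 𝕜 k | eP 𝕜 k 0 * a * eP 𝕜 k 0 = a}) := by
  have hk0 : 0 < k := hk
  have hjk : (k - 1) + 1 = k := by omega
  have heK : eP 𝕜 k k * eP 𝕜 k k = eP 𝕜 k k := A1k.ee le_rfl
  have he0 : eP 𝕜 k 0 * eP 𝕜 k 0 = eP 𝕜 k 0 := A1k.ee (Nat.zero_le k)
  have hev : eP 𝕜 k k * A1k.vv 𝕜 k (k - 1) = A1k.vv 𝕜 k (k - 1) := by
    have h := A1k.evv (𝕜 := 𝕜) (show k - 1 < k by omega)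
    rwa [hjk] at h
  have hve : A1k.vv 𝕜 k (k - 1) * eP 𝕜 k k = A1k.vv 𝕜 k (k - 1) := by
    have h := A1k.vve (𝕜 := 𝕜) (show k - 1 < k by omega)
    rwa [hjk] at h
  constructor
  · -- the corner at vertex k
    have hcomm : ∀ p : MvPolynomial (Fin 2) 𝕜,
        eP 𝕜 k k * A1k.PhiT 𝕜 k p = A1k.PhiT 𝕜 k p * eP 𝕜 k k := by
      intro p
      induction p using MvPolynomial.induction_on with
      | C a =>
        rw [← MvPolynomial.algebraMap_eq, AlgHom.commutes]
        exact (Algebra.commutes a (eP 𝕜 k k)).symm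
      | add p q ihp ihq => rw [map_add, mul_add, add_mul, ihp, ihq]
      | mul_X p n ih =>
        rw [map_mul, ← mul_assoc, ih, mul_assoc, mul_assoc]
        congr 1
        fin_cases n
        · rw [show ((⟨0, by omega⟩ : Fin 2)) = 0 from rfl, A1k.PhiT_X0, A1k.ex, A1k.xe]
        · rw [show ((⟨1, by omega⟩ : Fin 2)) = 1 from rfl, A1k.PhiT_X1, hev, hve]
    have hI : ∀ a ∈ Ideal.span {(X 0 : MvPolynomial (Fin 2) 𝕜) * X 1},
        A1k.PhiT 𝕜 k a = 0 := by
      intro a ha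
      obtain ⟨c, rfl⟩ := Ideal.mem_span_singleton.mp ha
      rw [map_mul, map_mul, A1k.PhiT_X0, A1k.PhiT_X1, A1k.xd, zero_mul]
    set Φq : (MvPolynomial (Fin 2) 𝕜 ⧸
        Ideal.span {(X 0 : MvPolynomial (Fin 2) 𝕜) * X 1}) →ₐ[𝕜] PathAlg 𝕜 k :=
      Ideal.Quotient.liftₐ _ (A1k.PhiT 𝕜 k) hI with hPhiq
    have hΦmk : ∀ p, Φq (Ideal.Quotient.mk _ p) = A1k.PhiT 𝕜 k p := by
      intro p
      rw [hPhiq, Ideal.Quotient.liftₐ_apply]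
      rfl
    set T : PathAlg 𝕜 k →ₗ[𝕜] PathAlg 𝕜 k :=
      (LinearMap.mulRight 𝕜 (eP 𝕜 k k)).comp (LinearMap.mulLeft 𝕜 (eP 𝕜 k k)) with hT
    have hTa : ∀ a, T a = eP 𝕜 k k * a * eP 𝕜 k k := fun a => rfl
    have happ : ∀ q, (T.comp Φq.toLinearMap) q = T (Φq q) := fun q => rfl
    have hone : (T.comp Φq.toLinearMap) 1 = eP 𝕜 k k := by
      rw [happ, map_one, hTa, mul_one, heK]
    have hpow : ∀ n, (T.comp Φq.toLinearMap) (Ideal.Quotient.mk _ ((X 0 : MvPolynomial (Fin 2) 𝕜) ^ (n + 1))) =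
        xP 𝕜 k ^ (n + 1) := by
      intro n
      rw [happ, hΦmk, map_pow, A1k.PhiT_X0, hTa, A1k.pow_absorb_left A1k.ex n,
        A1k.pow_absorb_right A1k.xe n]
    have hpow1 : ∀ n, (T.comp Φq.toLinearMap) (Ideal.Quotient.mk _ ((X 1 : MvPolynomial (Fin 2) 𝕜) ^ (n + 1))) =
        A1k.vv 𝕜 k (k - 1) ^ (n + 1) := by
      intro n
      rw [happ, hΦmk, map_pow, A1k.PhiT_X1, hTa, A1k.pow_absorb_left hev n,
        A1k.pow_absorb_right hve n]
    refine ⟨T.comp Φq.toLinearMap, ?_, hone, ?_, ?_, ?_, ?_⟩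
    · -- injective
      have hker : ∀ q, T (Φq q) = 0 → q = 0 := by
        intro q hq
        obtain ⟨p, rfl⟩ := Ideal.Quotient.mk_surjective q
        rw [hΦmk, hTa] at hq
        exact Ideal.Quotient.eq_zero_iff_mem.mpr (A1k.piK_ker (A1k.piK_eq_zero hk0 hq))
      intro a b hab
      have h2 : T (Φq (a - b)) = 0 := by
        have h3 : (T.comp Φq.toLinearMap) (a - b) = 0 := by
          rw [map_sub, hab, sub_self]
        exact h3
      exact sub_eq_zero.mp (hker _ h2)
    · -- multiplicative
      intro p q
      obtain ⟨p', rfl⟩ := Ideal.Quotient.mk_surjective p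
      obtain ⟨q', rfl⟩ := Ideal.Quotient.mk_surjective q
      rw [happ, happ, happ, ← map_mul (Ideal.Quotient.mk _), hΦmk, hΦmk, hΦmk, map_mul,
        hTa, hTa, hTa]
      exact (A1k.corner_mul _ _ _ heK (hcomm q')).symm
    · -- X 0
      rw [happ, hΦmk, A1k.PhiT_X0, hTa]
      exact A1k.exe
    · -- X 1
      rw [happ, hΦmk, A1k.PhiT_X1, hTa, hev, hve]
      rfl
    · -- range
      ext a
      simp only [Set.mem_range, Set.mem_setOf_eq]
      constructor
      · rintro ⟨q, rfl⟩
        rw [happ, hTa]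
        exact A1k.corner_idem _ _ heK
      · intro ha
        have hmem := A1k.corner_k_mem hjk ha
        have hle : Submodule.span 𝕜 (A1k.CK 𝕜 k (k - 1)) ≤
            LinearMap.range (T.comp Φq.toLinearMap) := by
          rw [Submodule.span_le]
          rintro b (rfl | ⟨n, rfl⟩ | ⟨n, rfl⟩)
          · exact ⟨1, hone⟩
          · exact ⟨_, hpow n⟩
          · exact ⟨_, hpow1 n⟩
        obtain ⟨q, hq⟩ := hle hmem
        exact ⟨q, hq⟩
  · -- the corner at vertex 0
    set Ψ : Polynomial 𝕜 →ₐ[𝕜] PathAlg 𝕜 k := Polynomial.aeval (A1k.uu 𝕜 k 0) with hPsi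
    have heu : eP 𝕜 k 0 * A1k.uu 𝕜 k 0 = A1k.uu 𝕜 k 0 := A1k.euu hk0
    have hue : A1k.uu 𝕜 k 0 * eP 𝕜 k 0 = A1k.uu 𝕜 k 0 := A1k.uue hk0
    have hupow : ∀ n, eP 𝕜 k 0 * A1k.uu 𝕜 k 0 ^ n = A1k.uu 𝕜 k 0 ^ n * eP 𝕜 k 0 := by
      intro n
      cases n with
      | zero => rw [pow_zero, one_mul, mul_one]
      | succ m => rw [A1k.pow_absorb_left heu m, A1k.pow_absorb_right hue m]
    have hcomm0 : ∀ p, eP 𝕜 k 0 * Ψ p = Ψ p * eP 𝕜 k 0 := by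
      intro p
      induction p using Polynomial.induction_on' with
      | add p q ihp ihq => rw [map_add, mul_add, add_mul, ihp, ihq]
      | monomial n a =>
        rw [hPsi, Polynomial.aeval_monomial, ← mul_assoc,
          show eP 𝕜 k 0 * algebraMap 𝕜 (PathAlg 𝕜 k) a = algebraMap 𝕜 (PathAlg 𝕜 k) a * eP 𝕜 k 0
            from (Algebra.commutes a (eP 𝕜 k 0)).symm,
          mul_assoc, mul_assoc, hupow n]
    set T0 : PathAlg 𝕜 k →ₗ[𝕜] PathAlg 𝕜 k :=
      (LinearMap.mulRight 𝕜 (eP 𝕜 k 0)).comp (LinearMap.mulLeft 𝕜 (eP 𝕜 k 0)) with hT0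
    have hT0a : ∀ a, T0 a = eP 𝕜 k 0 * a * eP 𝕜 k 0 := fun a => rfl
    have happ0 : ∀ q, (T0.comp Ψ.toLinearMap) q = T0 (Ψ q) := fun q => rfl
    have hone0 : (T0.comp Ψ.toLinearMap) 1 = eP 𝕜 k 0 := by
      rw [happ0, map_one, hT0a, mul_one, he0]
    have hupow2 : ∀ n, (T0.comp Ψ.toLinearMap) (Polynomial.X ^ (n + 1)) =
        A1k.uu 𝕜 k 0 ^ (n + 1) := by
      intro n
      rw [happ0, map_pow, hPsi, Polynomial.aeval_X, hT0a, A1k.pow_absorb_left heu n,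
        A1k.pow_absorb_right hue n]
    refine ⟨T0.comp Ψ.toLinearMap, ?_, hone0, ?_, ?_, ?_⟩
    · -- injective
      have hker : ∀ p, T0 (Ψ p) = 0 → p = 0 := by
        intro p hp
        rw [hT0a, hPsi] at hp
        exact A1k.aeval_w_inj (A1k.key_0 hk0 hp)
      intro a b hab
      have h2 : T0 (Ψ (a - b)) = 0 := by
        have h3 : (T0.comp Ψ.toLinearMap) (a - b) = 0 := by
          rw [map_sub, hab, sub_self]
        exact h3
      exact sub_eq_zero.mp (hker _ h2)
    · -- multiplicative
      intro p q
      rw [happ0, happ0, happ0, map_mul, hT0a, hT0a, hT0a]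
      exact (A1k.corner_mul _ _ _ he0 (hcomm0 q)).symm
    · -- X
      rw [happ0, hPsi, Polynomial.aeval_X, hT0a, heu, hue]
      rfl
    · -- range
      ext a
      simp only [Set.mem_range, Set.mem_setOf_eq]
      constructor
      · rintro ⟨q, rfl⟩
        rw [happ0, hT0a]
        exact A1k.corner_idem _ _ he0
      · intro ha
        have hmem := A1k.corner_0_mem hk0 ha
        have hle : Submodule.span 𝕜 (A1k.C0 𝕜 k) ≤
            LinearMap.range (T0.comp Ψ.toLinearMap) := by
          rw [Submodule.span_le]
          rintro b (rfl | ⟨n, rfl⟩)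
          · exact ⟨1, hone0⟩
          · exact ⟨_, hupow2 n⟩
        obtain ⟨q, hq⟩ := hle hmem
        exact ⟨q, hq⟩
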